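/- Let λ, μ ∈ 𝒫^l_n, let 0 ≤ j ≤ n and let s, t ∈ Std(μ). If s is λ-column-dominated on 1,…,j and s ⊵ t (that is, w_s ≥ w_t in the Bruhat order), then t is λ-column-dominated on 1,…,j. In particular, if s ∈ Std_λ(μ) and s ⊵ t, then t ∈ Std_λ(μ). -/

import Mathlib

namespace FS

open scoped Classical

/-- A node `(r, c, m)`: row `r`, column `c`, component `m` (all 1-based). -/
abbrev Node := ℕ × ℕ × ℕ

/-- Membership of a node in the Young diagram of the multipartition `p`,
where `p m r` is the `r`-th part of the `m`-th component. -/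
def InDiag (p : ℕ → ℕ → ℕ) (A : Node) : Prop :=
  1 ≤ A.2.1 ∧ A.2.1 ≤ p A.2.2 A.1

/-- `p` is an `l`-multipartition of `n` (components indexed `1,…,l`, rows indexed `1,…`). -/
def IsMP (l n : ℕ) (p : ℕ → ℕ → ℕ) : Prop :=
  (∀ m r, (m = 0 ∨ l < m ∨ r = 0 ∨ n < r) → p m r = 0) ∧
  (∀ m r, 1 ≤ r → p m (r + 1) ≤ p m r) ∧
  (∑ m ∈ Finset.Icc 1 l, ∑ r ∈ Finset.Icc 1 n, p m r) = n

/-- Total size of an `l`-multicomposition (rows bounded by `n`). -/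
def mpSize (l n : ℕ) (p : ℕ → ℕ → ℕ) : ℕ :=
  ∑ m ∈ Finset.Icc 1 l, ∑ r ∈ Finset.Icc 1 n, p m r

/-- Size of the `m`-th component. -/
def compSize (n : ℕ) (p : ℕ → ℕ → ℕ) (m : ℕ) : ℕ :=
  ∑ r ∈ Finset.Icc 1 n, p m r

/-- Length of column `c` of component `m`, i.e. `(p^(m))'_c`. -/
def colLen (n : ℕ) (p : ℕ → ℕ → ℕ) (m c : ℕ) : ℕ :=
  ((Finset.Icc 1 n).filter fun r => c ≤ p m r).card

/-- Dominance order on `l`-multicompositions: `Dom l N p q` means `p ⊵ q`. -/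
def Dom (l N : ℕ) (p q : ℕ → ℕ → ℕ) : Prop :=
  ∀ m r, 1 ≤ m → m ≤ l →
    (∑ m' ∈ Finset.Icc 1 (m - 1), compSize N q m') + ∑ r' ∈ Finset.Icc 1 r, q m r' ≤
      (∑ m' ∈ Finset.Icc 1 (m - 1), compSize N p m') + ∑ r' ∈ Finset.Icc 1 r, p m r'

/-- `t` is a `p`-tableau: a bijection from the diagram of `p` onto `{1,…,n}`. -/
def IsTab (n : ℕ) (p : ℕ → ℕ → ℕ) (t : Node → ℕ) : Prop :=
  (∀ A, InDiag p A → 1 ≤ t A ∧ t A ≤ n) ∧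
  (∀ A B, InDiag p A → InDiag p B → t A = t B → A = B) ∧
  (∀ i, 1 ≤ i → i ≤ n → ∃ A, InDiag p A ∧ t A = i)

/-- Entries increase from left to right along each row. -/
def RowStrict (p : ℕ → ℕ → ℕ) (t : Node → ℕ) : Prop :=
  ∀ r c m, InDiag p (r, c, m) → InDiag p (r, c + 1, m) → t (r, c, m) < t (r, c + 1, m)

/-- Entries increase down each column. -/
def ColStrict (p : ℕ → ℕ → ℕ) (t : Node → ℕ) : Prop :=
  ∀ r c m, InDiag p (r, c, m) → InDiag p (r + 1, c, m) → t (r, c, m) < t (r + 1, c, m)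

/-- A standard tableau is both row-strict and column-strict. -/
def IsStd (p : ℕ → ℕ → ℕ) (t : Node → ℕ) : Prop := RowStrict p t ∧ ColStrict p t

/-- The tableau `t_λ`, obtained by writing `1,…,n` in order down successive columns
from left to right (components from `l` down to `1`). -/
def colTab (l n : ℕ) (p : ℕ → ℕ → ℕ) : Node → ℕ := fun A =>
  (∑ m' ∈ Finset.Icc (A.2.2 + 1) l, compSize n p m') +
    (∑ c' ∈ Finset.Icc 1 (A.2.1 - 1), colLen n p A.2.2 c') + A.1

/-- The tableau `t^λ`, obtained by writing `1,…,n` in order along successive rows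
from top to bottom (components from `1` up to `l`). -/
def rowTab (n : ℕ) (p : ℕ → ℕ → ℕ) : Node → ℕ := fun A =>
  (∑ m' ∈ Finset.Icc 1 (A.2.2 - 1), compSize n p m') +
    (∑ r' ∈ Finset.Icc 1 (A.1 - 1), p A.2.2 r') + A.2.1

/-- The Coxeter generator `s_i = (i, i+1)` of the symmetric group. -/
def sw (i : ℕ) : Equiv.Perm ℕ := Equiv.swap i (i + 1)

/-- The product `s_{i_1} ⋯ s_{i_k}` corresponding to a word `L = [i_1,…,i_k]`. -/
def wordProd (L : List ℕ) : Equiv.Perm ℕ := (L.map sw).prod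

/-- `L` is an expression for `w` in the Coxeter generators `s_1,…,s_{n-1}` of `S_n`. -/
def IsWord (n : ℕ) (L : List ℕ) (w : Equiv.Perm ℕ) : Prop :=
  (∀ i ∈ L, 1 ≤ i ∧ i + 1 ≤ n) ∧ wordProd L = w

/-- The Coxeter length of `w ∈ S_n`. -/
noncomputable def len (n : ℕ) (w : Equiv.Perm ℕ) : ℕ :=
  sInf {k | ∃ L, IsWord n L w ∧ L.length = k}

/-- `L` is a reduced expression for `w ∈ S_n`. -/
def IsReduced (n : ℕ) (L : List ℕ) (w : Equiv.Perm ℕ) : Prop :=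
  IsWord n L w ∧ L.length = len n w

/-- The Bruhat order on `S_n`: `x ≤ w` iff some reduced expression for `w` has an
expression for `x` as a subsequence. -/
def BruhatLE (n : ℕ) (x w : Equiv.Perm ℕ) : Prop :=
  ∃ L, IsReduced n L w ∧ ∃ L', L'.Sublist L ∧ wordProd L' = x

/-- Strict Bruhat order. -/
def BruhatLT (n : ℕ) (x w : Equiv.Perm ℕ) : Prop := BruhatLE n x w ∧ x ≠ w

/-- The left (weak) order on `S_n`: `x ≤_L w` iff `ℓ(w) = ℓ(w x⁻¹) + ℓ(x)`. -/
def LeftLE (n : ℕ) (x w : Equiv.Perm ℕ) : Prop :=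
  len n w = len n (w * x⁻¹) + len n x

/-- `w` is a permutation of `{1,…,n}` (fixing everything else). -/
def PermOf (n : ℕ) (w : Equiv.Perm ℕ) : Prop := ∀ i, i = 0 ∨ n < i → w i = i

/-- `w` is the permutation sending the base tableau `base` to the tableau `t`
(e.g. `w = w_t` when `base = t_λ`). -/
def IsPermOfTab (n : ℕ) (p : ℕ → ℕ → ℕ) (base t : Node → ℕ) (w : Equiv.Perm ℕ) : Prop :=
  PermOf n w ∧ ∀ A, InDiag p A → w (base A) = t A

/-- `Shape(t↓j)`: the multicomposition whose `(m, r)` entry is the number of nodes in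
row `r` of component `m` whose entry under `t` is at most `j`. -/
def shape (n : ℕ) (p : ℕ → ℕ → ℕ) (t : Node → ℕ) (j : ℕ) : ℕ → ℕ → ℕ :=
  fun m r => ((Finset.Icc 1 n).filter fun c => c ≤ p m r ∧ t (r, c, m) ≤ j).card

/-- `Shape(t↓j)'`: the conjugate multicomposition, whose `(m, c)` entry is the number of
nodes in column `c` of component `l + 1 - m` whose entry under `t` is at most `j`. -/
def shapeConj (l n : ℕ) (p : ℕ → ℕ → ℕ) (t : Node → ℕ) (j : ℕ) : ℕ → ℕ → ℕ :=
  fun m c => ((Finset.Icc 1 n).filter fun r => c ≤ p (l + 1 - m) r ∧ t (r, c, l + 1 - m) ≤ j).card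

/-- `A` lies weakly to the left of `B`. -/
def WeaklyLeft (A B : Node) : Prop :=
  B.2.2 < A.2.2 ∨ (A.2.2 = B.2.2 ∧ A.2.1 ≤ B.2.1)

/-- `A` lies weakly above `B`. -/
def WeaklyAbove (A B : Node) : Prop :=
  A.2.2 < B.2.2 ∨ (A.2.2 = B.2.2 ∧ A.1 ≤ B.1)

/-- `A` lies weakly to the right of `B`. -/
def WeaklyRight (A B : Node) : Prop :=
  A.2.2 < B.2.2 ∨ (A.2.2 = B.2.2 ∧ B.2.1 ≤ A.2.1)

/-- `t` (a `mu`-tableau) is `lam`-column-dominated on `1,…,j`: each `i ≤ j` appears in `t`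
at least as far to the left as it does in `t_lam`. -/
def ColDomOn (l n : ℕ) (lam mu : ℕ → ℕ → ℕ) (t : Node → ℕ) (j : ℕ) : Prop :=
  ∀ i A B, 1 ≤ i → i ≤ j → InDiag mu A → t A = i → InDiag lam B →
    colTab l n lam B = i → WeaklyLeft A B

/-- `t` is weakly `lam`-column-dominated on `1,…,j`: each `i ≤ j` appears in `t` in a
component at least as far to the left as it does in `t_lam`. -/
def WColDomOn (l n : ℕ) (lam mu : ℕ → ℕ → ℕ) (t : Node → ℕ) (j : ℕ) : Prop :=
  ∀ i A B, 1 ≤ i → i ≤ j → InDiag mu A → t A = i → InDiag lam B →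
    colTab l n lam B = i → B.2.2 ≤ A.2.2

/-- `t` (a `mu`-tableau) is `lam`-row-dominated on `1,…,j`: each `i ≤ j` appears in `t`
at least as high as it does in `t^lam`. -/
def RowDomOn (n : ℕ) (lam mu : ℕ → ℕ → ℕ) (t : Node → ℕ) (j : ℕ) : Prop :=
  ∀ i A B, 1 ≤ i → i ≤ j → InDiag mu A → t A = i → InDiag lam B →
    rowTab n lam B = i → WeaklyAbove A B

/-- The multipartition `λ_L(c, m)`: the first `c` columns of component `m`, followed by
components `m+1,…,l`. -/
def leftPart (lam : ℕ → ℕ → ℕ) (c m : ℕ) : ℕ → ℕ → ℕ := fun k r =>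
  if k = 0 then 0 else if k = 1 then min (lam m r) c else lam (m + k - 1) r

/-- The multipartition `λ_R(c, m)`: components `1,…,m-1`, followed by the part of
component `m` after its first `c` columns. -/
def rightPart (lam : ℕ → ℕ → ℕ) (c m : ℕ) : ℕ → ℕ → ℕ := fun k r =>
  if k < m then lam k r else if k = m then lam m r - c else 0

/-- The multipartition `λ_T(r₀, m)`: components `1,…,m-1`, followed by the first `r₀`
rows of component `m`. -/
def topPart (lam : ℕ → ℕ → ℕ) (r₀ m : ℕ) : ℕ → ℕ → ℕ := fun k r =>
  if k < m then lam k r else if k = m then (if r ≤ r₀ then lam m r else 0) else 0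

/-- The multipartition `λ_B(r₀, m)`: the rows of component `m` after row `r₀`, followed
by components `m+1,…,l`. -/
def botPart (lam : ℕ → ℕ → ℕ) (r₀ m : ℕ) : ℕ → ℕ → ℕ := fun k r =>
  if k = 0 ∨ r = 0 then 0 else if k = 1 then lam m (r₀ + r) else lam (m + k - 1) r

/-- The glued tableau `t_L # t_R`: places `1,…,n_L` on the left part as in `t_L`, and
places `n_L + t_R(A)` at the node corresponding to each node `A` of the right part. -/
def glueLR (nL c m : ℕ) (tL tR : Node → ℕ) : Node → ℕ := fun A =>
  if A.2.2 < m then nL + tR A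
  else if A.2.2 = m then
    (if A.2.1 ≤ c then tL (A.1, A.2.1, 1) else nL + tR (A.1, A.2.1 - c, m))
  else tL (A.1, A.2.1, A.2.2 - m + 1)

/-- The tableau `t⁺` obtained from a tableau `t` of `μ_R(1,m)` by increasing all entries
by `k`, adjoining a first column with entries `1,…,k` to component `m`, and adjoining
empty components `m+1,…,l`. -/
def addFirstCol (k m : ℕ) (t : Node → ℕ) : Node → ℕ := fun A =>
  if A.2.2 = m then (if A.2.1 = 1 then A.1 else k + t (A.1, A.2.1 - 1, m))
  else k + t A

/-- The tableau `t⁺` obtained from a tableau `t` of `μ_L(d-1,m)` by adjoining empty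
components `1,…,m-1` and adjoining a column `d` to component `m` with entries
`nk+1,…,nk+k` from top to bottom. -/
def addLastCol (nk m d : ℕ) (t : Node → ℕ) : Node → ℕ := fun A =>
  if A.2.2 = m then (if A.2.1 = d then nk + A.1 else t (A.1, A.2.1, 1))
  else t (A.1, A.2.1, A.2.2 - m + 1)

/-- The `i`-th smallest element of a finite set of naturals (1-based). -/
def nthElt (S : Finset ℕ) (i : ℕ) : ℕ := (S.sort (· ≤ ·)).getD (i - 1) 0

/-- The set `S_B` of entries of `t_λ` lying in the bottom region (component `> m`, or
component `m` in a row `> r₀`). -/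
noncomputable def SB (l n : ℕ) (lam : ℕ → ℕ → ℕ) (r₀ m : ℕ) : Finset ℕ :=
  (Finset.Icc 1 n).filter fun i =>
    ∃ A, InDiag lam A ∧ colTab l n lam A = i ∧ (m < A.2.2 ∨ (A.2.2 = m ∧ r₀ < A.1))

/-- The glued tableau `t #̄ s`: on the bottom region the entries are `lab_B ∘ t` and on
the top region they are `lab_T ∘ s`, where `lab_B`, `lab_T` are the order-preserving
bijections onto `S_B`, `S_T`. -/
def glueBT (S_B S_T : Finset ℕ) (r₀ m : ℕ) (tB tT : Node → ℕ) : Node → ℕ := fun A =>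
  if A.2.2 < m then nthElt S_T (tT A)
  else if A.2.2 = m then
    (if A.1 ≤ r₀ then nthElt S_T (tT A) else nthElt S_B (tB (A.1 - r₀, A.2.1, 1)))
  else nthElt S_B (tB (A.1, A.2.1, A.2.2 - m + 1))

/-- The residue of a node `(r, c, m)` with respect to the multicharge `κ`:
`κ_m + c - r` in `ℤ/eℤ` (with `ZMod 0 = ℤ` encoding `e = ∞`). -/
def resNode (e : ℕ) (κ : ℕ → ZMod e) (A : Node) : ZMod e :=
  κ A.2.2 + (A.2.1 : ZMod e) - (A.1 : ZMod e)

-- basics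
@[simp] lemma wordProd_nil : wordProd [] = 1 := rfl
@[simp] lemma wordProd_cons (i : ℕ) (L : List ℕ) :
    wordProd (i :: L) = sw i * wordProd L := by
  simp [wordProd]

lemma wordProd_zero {L : List ℕ} (h : ∀ i ∈ L, 1 ≤ i) : wordProd L 0 = 0 := by
  induction L with
  | nil => rfl
  | cons i M ih =>
    have hi : 1 ≤ i := h i (by simp)
    have hM : wordProd M 0 = 0 := ih fun a ha => h a (by simp [ha])
    simp only [wordProd_cons, Equiv.Perm.mul_apply, hM, sw]
    rw [Equiv.swap_apply_of_ne_of_ne] <;> omega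

lemma symm_pos {v : Equiv.Perm ℕ} (hv : v 0 = 0) {i : ℕ} (hi : 1 ≤ i) :
    1 ≤ v.symm i := by
  by_contra h
  have : v.symm i = 0 := by omega
  have := congrArg v this
  rw [Equiv.apply_symm_apply, hv] at this
  omega

lemma swap_lt {j a b : ℕ} (h : a < b) (hne : ¬(a = j ∧ b = j + 1)) :
    Equiv.swap j (j + 1) a < Equiv.swap j (j + 1) b := by
  simp only [Equiv.swap_apply_def]
  split_ifs <;> omega

lemma exchange : ∀ (M : List ℕ) (a b : ℕ), a < b →
    (wordProd M).symm b < (wordProd M).symm a →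
    ∃ M₂, M₂.Sublist M ∧ M₂.length + 1 = M.length ∧
      wordProd M₂ = Equiv.swap a b * wordProd M := by
  intro M
  induction M with
  | nil =>
    intro a b hab hpos
    simp only [wordProd_nil] at hpos
    have h1 : (Equiv.symm (1 : Equiv.Perm ℕ)) a = a := rfl
    have h2 : (Equiv.symm (1 : Equiv.Perm ℕ)) b = b := rfl
    omega
  | cons j M' ih =>
    intro a b hab hpos
    set u := wordProd M' with hu
    have hinv : (sw j)⁻¹ = sw j := by rw [sw, Equiv.swap_inv]
    have hsymm : ∀ x, (wordProd (j :: M')).symm x = u.symm (sw j x) := by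
      intro x
      have h1 : (wordProd (j :: M'))⁻¹ = u⁻¹ * (sw j)⁻¹ := by
        rw [wordProd_cons]; exact mul_inv_rev _ _
      calc (wordProd (j :: M')).symm x = (wordProd (j :: M'))⁻¹ x := rfl
        _ = (u⁻¹ * (sw j)⁻¹) x := by rw [h1]
        _ = u.symm ((sw j)⁻¹ x) := rfl
        _ = u.symm (sw j x) := by rw [hinv]
    by_cases hc : a = j ∧ b = j + 1
    · refine ⟨M', List.sublist_cons_self j M', by simp, ?_⟩
      rw [hc.1, hc.2, wordProd_cons, ← mul_assoc]
      show u = sw j * sw j * u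
      rw [sw, Equiv.swap_mul_self, one_mul]
    · have hab' : sw j a < sw j b := swap_lt hab hc
      have hpos' : u.symm (sw j b) < u.symm (sw j a) := by
        rw [hsymm, hsymm] at hpos; exact hpos
      obtain ⟨M₂', hsub, hlen, hprod⟩ := ih (sw j a) (sw j b) hab' hpos'
      refine ⟨j :: M₂', List.cons_sublist_cons.mpr hsub, by simp [← hlen], ?_⟩
      have hsw : Equiv.swap (sw j a) (sw j b) = sw j * Equiv.swap a b * (sw j)⁻¹ :=
        Equiv.swap_apply_apply (sw j) a b
      rw [wordProd_cons, hprod, hsw, wordProd_cons]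
      rw [show sw j * (sw j * Equiv.swap a b * (sw j)⁻¹ * u)
            = ((sw j * sw j) * Equiv.swap a b) * ((sw j)⁻¹ * u) by group]
      rw [show sw j * sw j = 1 by rw [sw, Equiv.swap_mul_self], hinv]
      group
      rw [hu]



lemma len_le {n : ℕ} {L : List ℕ} {w : Equiv.Perm ℕ} (h : IsWord n L w) :
    len n w ≤ L.length := Nat.sInf_le ⟨L, h, rfl⟩

lemma exists_reduced {n : ℕ} {w : Equiv.Perm ℕ} (h : ∃ L, IsWord n L w) :
    ∃ L, IsWord n L w ∧ L.length = len n w := by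
  obtain ⟨L, hL⟩ := h
  have hne : {k | ∃ L, IsWord n L w ∧ L.length = k}.Nonempty := ⟨L.length, L, hL, rfl⟩
  obtain ⟨L', hL', hlen⟩ := Nat.sInf_mem hne
  exact ⟨L', hL', hlen⟩

lemma tail_reduced {n i : ℕ} {M : List ℕ} {w : Equiv.Perm ℕ}
    (h : IsReduced n (i :: M) w) :
    IsReduced n M (wordProd M) ∧
      (wordProd M).symm i < (wordProd M).symm (i + 1) := by
  obtain ⟨⟨hlet, hprod⟩, hlen⟩ := h
  set v := wordProd M with hv
  have hMword : IsWord n M v := ⟨fun a ha => hlet a (by simp [ha]), rfl⟩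
  have horder : v.symm i < v.symm (i + 1) := by
    rcases lt_trichotomy (v.symm i) (v.symm (i + 1)) with h1 | h1 | h1
    · exact h1
    · have := v.symm.injective h1; omega
    · exfalso
      obtain ⟨M₂, hsub, hlen2, hprod2⟩ := exchange M i (i + 1) (by omega) h1
      have hword : IsWord n M₂ w := by
        refine ⟨fun a ha => hlet a (by simp [hsub.subset ha]), ?_⟩
        rw [hprod2, ← hprod, wordProd_cons]; rfl
      have := len_le hword
      rw [← hlen] at this
      simp only [List.length_cons] at this
      omega
  refine ⟨⟨hMword, ?_⟩, horder⟩
  have h1 : len n v ≤ M.length := len_le hMword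
  by_contra hcon
  have h2 : len n v < M.length := by omega
  obtain ⟨M', hM', hlenM'⟩ := exists_reduced ⟨M, hMword⟩
  have hword : IsWord n (i :: M') w := by
    refine ⟨?_, ?_⟩
    · intro a ha
      rcases List.mem_cons.mp ha with rfl | ha
      · exact hlet a (by simp)
      · exact hM'.1 a ha
    · rw [wordProd_cons, hM'.2, ← hprod, wordProd_cons]
  have := len_le hword
  rw [← hlen] at this
  simp only [List.length_cons] at this
  omega

noncomputable def Dc (w : Equiv.Perm ℕ) (p q : ℕ) : ℕ :=
  ((Finset.Icc 1 p).filter fun a => w a ≤ q).card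

lemma Dc_eq_sum (w : Equiv.Perm ℕ) (p q : ℕ) :
    Dc w p q = ∑ a ∈ Finset.Icc 1 p, if w a ≤ q then 1 else 0 := by
  rw [Dc, Finset.card_filter]

lemma Dc_succ (v : Equiv.Perm ℕ) (p q : ℕ) :
    Dc v p q + (if v.symm (q + 1) ∈ Finset.Icc 1 p then 1 else 0) = Dc v p (q + 1) := by
  rw [Dc_eq_sum, Dc_eq_sum,
    ← Finset.sum_ite_eq' (Finset.Icc 1 p) (v.symm (q + 1)) (fun _ => (1 : ℕ)),
    ← Finset.sum_add_distrib]
  apply Finset.sum_congr rfl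
  intro a _
  by_cases h1 : a = v.symm (q + 1)
  · subst h1
    rw [Equiv.apply_symm_apply, if_neg (by omega), if_pos rfl, if_pos (le_refl _)]
  · have hne : v a ≠ q + 1 := fun hh => h1 (by rw [← hh, Equiv.symm_apply_apply])
    rw [if_neg h1, add_zero]
    by_cases h2 : v a ≤ q
    · rw [if_pos h2, if_pos (by omega)]
    · rw [if_neg h2, if_neg (by omega)]

lemma Dc_swap' (v : Equiv.Perm ℕ) (i p : ℕ) :
    Dc (sw i * v) p i + (if v.symm i ∈ Finset.Icc 1 p then 1 else 0) =
    Dc v p i + (if v.symm (i + 1) ∈ Finset.Icc 1 p then 1 else 0) := by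
  rw [Dc_eq_sum, Dc_eq_sum,
    ← Finset.sum_ite_eq' (Finset.Icc 1 p) (v.symm i) (fun _ => (1 : ℕ)),
    ← Finset.sum_ite_eq' (Finset.Icc 1 p) (v.symm (i + 1)) (fun _ => (1 : ℕ)),
    ← Finset.sum_add_distrib, ← Finset.sum_add_distrib]
  apply Finset.sum_congr rfl
  intro a _
  have hswl : sw i i = i + 1 := by rw [sw]; exact Equiv.swap_apply_left _ _
  have hswr : sw i (i + 1) = i := by rw [sw]; exact Equiv.swap_apply_right _ _
  simp only [Equiv.Perm.mul_apply]
  rcases eq_or_ne (v a) i with h | h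
  · have ha1 : a = v.symm i := by rw [Equiv.eq_symm_apply, h]
    have ha2 : a ≠ v.symm (i + 1) := by rw [Ne, Equiv.eq_symm_apply, h]; omega
    simp only [h, hswl, if_pos ha1, if_neg ha2]
    simp only [if_neg (show ¬(i + 1 ≤ i) by omega), if_pos (le_refl i)]
    omega
  rcases eq_or_ne (v a) (i + 1) with h2 | h2
  · have ha1 : a ≠ v.symm i := by rw [Ne, Equiv.eq_symm_apply, h2]; omega
    have ha2 : a = v.symm (i + 1) := by rw [Equiv.eq_symm_apply, h2]
    simp only [h2, hswr, if_neg ha1, if_pos ha2]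
    simp only [if_pos (le_refl i), if_neg (show ¬(i + 1 ≤ i) by omega)]
    omega
  · have hval : sw i (v a) = v a := by
      rw [sw]; exact Equiv.swap_apply_of_ne_of_ne h h2
    have ha1 : a ≠ v.symm i := by rw [Ne, Equiv.eq_symm_apply]; exact h
    have ha2 : a ≠ v.symm (i + 1) := by rw [Ne, Equiv.eq_symm_apply]; exact h2
    simp only [hval, if_neg ha1, if_neg ha2]

lemma Dc_swap_ne (v : Equiv.Perm ℕ) {i q : ℕ} (p : ℕ) (hq : q ≠ i) :
    Dc (sw i * v) p q = Dc v p q := by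
  rw [Dc, Dc]
  congr 1
  apply Finset.filter_congr
  intro a _
  have hswl : sw i i = i + 1 := by rw [sw]; exact Equiv.swap_apply_left _ _
  have hswr : sw i (i + 1) = i := by rw [sw]; exact Equiv.swap_apply_right _ _
  simp only [Equiv.Perm.mul_apply, eq_iff_iff]
  rcases eq_or_ne (v a) i with h | h
  · simp only [h, hswl]; omega
  rcases eq_or_ne (v a) (i + 1) with h2 | h2
  · simp only [h2, hswr]; omega
  · have hval : sw i (v a) = v a := by
      rw [sw]; exact Equiv.swap_apply_of_ne_of_ne h h2
    simp only [hval]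

lemma count_le_of_sublist (n : ℕ) :
    ∀ (L : List ℕ) (w : Equiv.Perm ℕ), IsReduced n L w →
    ∀ L', L'.Sublist L → ∀ p q, Dc w p q ≤ Dc (wordProd L') p q := by
  intro L
  induction L with
  | nil =>
    intro w hred L' hsub p q
    have hL' : L' = [] := List.sublist_nil.mp hsub
    subst hL'
    have hw : w = 1 := by rw [← hred.1.2]; rfl
    rw [hw]
    exact le_of_eq (by rw [wordProd_nil])
  | cons i M ih =>
    intro w hred L' hsub p q
    obtain ⟨hMred, horder⟩ := tail_reduced hred
    set v := wordProd M with hv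
    have hi : 1 ≤ i := (hred.1.1 i (by simp)).1
    have hletM : ∀ a ∈ M, 1 ≤ a := fun a ha => (hred.1.1 a (by simp [ha])).1
    have hv0 : v 0 = 0 := wordProd_zero hletM
    have hw : w = sw i * v := by rw [← hred.1.2, wordProd_cons]
    have key : ∀ p', v.symm (i + 1) ∈ Finset.Icc 1 p' →
        v.symm i ∈ Finset.Icc 1 p' := by
      intro p' hmem
      rw [Finset.mem_Icc] at hmem ⊢
      exact ⟨symm_pos hv0 hi, by omega⟩
    have hwv : ∀ p' q', Dc w p' q' ≤ Dc v p' q' := by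
      intro p' q'
      rw [hw]
      by_cases hq : q' = i
      · rw [hq]
        have hs := Dc_swap' v i p'
        by_cases hA : v.symm (i + 1) ∈ Finset.Icc 1 p'
        · rw [if_pos (key p' hA), if_pos hA] at hs; omega
        · rw [if_neg hA] at hs; omega
      · rw [Dc_swap_ne v p' hq]
    rcases List.sublist_cons_iff.mp hsub with hsubM | ⟨M', rfl, hsubM⟩
    · exact le_trans (hwv p q) (ih v hMred L' hsubM p q)
    · set y := wordProd M' with hy
      have hIH : ∀ p q, Dc v p q ≤ Dc y p q := ih v hMred M' hsubM
      rw [hw, wordProd_cons, ← hy]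
      by_cases hq : q = i
      · rw [hq]
        have eqv := Dc_swap' v i p
        have eqy := Dc_swap' y i p
        have him : i - 1 + 1 = i := by omega
        have h1v := Dc_succ v p (i - 1); rw [him] at h1v
        have h1y := Dc_succ y p (i - 1); rw [him] at h1y
        have h2v := Dc_succ v p i
        have h2y := Dc_succ y p i
        have ih1 := hIH p (i - 1)
        have ih2 := hIH p i
        have ih3 := hIH p (i + 1)
        have hkey := key p
        split_ifs at eqv eqy h1v h1y h2v h2y <;>
          first
            | omega
            | (exact absurd
                (hkey (show v.symm (i + 1) ∈ Finset.Icc 1 p by assumption))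
                (show v.symm i ∉ Finset.Icc 1 p by assumption))
      · rw [Dc_swap_ne v p hq, Dc_swap_ne y p hq]
        exact hIH p q

lemma Dc_le_of_bruhat {n : ℕ} {x w : Equiv.Perm ℕ} (h : BruhatLE n x w) :
    ∀ p q, Dc w p q ≤ Dc x p q := by
  obtain ⟨L, hred, L', hsub, hprod⟩ := h
  intro p q
  have := count_le_of_sublist n L w hred L' hsub p q
  rwa [hprod] at this


/-! ### Part 2: combinatorics of the column-reading tableau -/

def Tsum (l n : ℕ) (p : ℕ → ℕ → ℕ) (m : ℕ) : ℕ :=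
  ∑ m' ∈ Finset.Icc (m + 1) l, compSize n p m'

def Kv (l n : ℕ) (p : ℕ → ℕ → ℕ) (m c : ℕ) : ℕ :=
  Tsum l n p m + ∑ c' ∈ Finset.Icc 1 c, colLen n p m c'

lemma colTab_eq (l n : ℕ) (p : ℕ → ℕ → ℕ) (r c m : ℕ) :
    colTab l n p (r, c, m) =
      Tsum l n p m + (∑ c' ∈ Finset.Icc 1 (c - 1), colLen n p m c') + r := rfl

section MP

variable {l n : ℕ} {p : ℕ → ℕ → ℕ} (hp : IsMP l n p)

include hp

lemma parts_anti {m r1 r2 : ℕ} (h1 : 1 ≤ r1) (h12 : r1 ≤ r2) : p m r2 ≤ p m r1 := by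
  induction r2 with
  | zero => omega
  | succ k ih =>
    rcases Nat.lt_or_ge r1 (k + 1) with h | h
    · exact le_trans (hp.2.1 m k (by omega)) (ih (by omega))
    · have : r1 = k + 1 := by omega
      rw [this]

lemma diag_bounds {r c m : ℕ} (hA : InDiag p (r, c, m)) :
    1 ≤ r ∧ r ≤ n ∧ 1 ≤ m ∧ m ≤ l ∧ 1 ≤ c ∧ c ≤ p m r := by
  obtain ⟨h1, h2⟩ := hA
  simp only at h1 h2
  by_cases hz : m = 0 ∨ l < m ∨ r = 0 ∨ n < r
  · have := hp.1 m r hz; omega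
  · push_neg at hz; refine ⟨by omega, by omega, by omega, by omega, h1, h2⟩

lemma part_le_n {m r : ℕ} (hm1 : 1 ≤ m) (hml : m ≤ l) (hr1 : 1 ≤ r) (hrn : r ≤ n) :
    p m r ≤ n := by
  have h1 : p m r ≤ ∑ r' ∈ Finset.Icc 1 n, p m r' :=
    Finset.single_le_sum (fun _ _ => Nat.zero_le _) (Finset.mem_Icc.mpr ⟨hr1, hrn⟩)
  have h2 : (∑ r' ∈ Finset.Icc 1 n, p m r') ≤
      ∑ m' ∈ Finset.Icc 1 l, ∑ r' ∈ Finset.Icc 1 n, p m' r' :=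
    Finset.single_le_sum (f := fun m' => ∑ r' ∈ Finset.Icc 1 n, p m' r')
      (fun _ _ => Nat.zero_le _) (Finset.mem_Icc.mpr ⟨hm1, hml⟩)
  calc p m r ≤ _ := h1
    _ ≤ _ := h2
    _ = n := hp.2.2

omit hp in
lemma Icc_filter_le (N k : ℕ) :
    (Finset.Icc 1 N).filter (fun c => c ≤ k) = Finset.Icc 1 (min k N) := by
  ext c
  simp only [Finset.mem_filter, Finset.mem_Icc]
  omega

lemma colLen_ge {r c m : ℕ} (hA : InDiag p (r, c, m)) : r ≤ colLen n p m c := by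
  obtain ⟨hr1, hrn, _, _, _, hc⟩ := diag_bounds hp hA
  have hsub : Finset.Icc 1 r ⊆ (Finset.Icc 1 n).filter (fun r' => c ≤ p m r') := by
    intro r' hr'
    rw [Finset.mem_Icc] at hr'
    rw [Finset.mem_filter, Finset.mem_Icc]
    exact ⟨⟨hr'.1, by omega⟩, le_trans hc (parts_anti hp hr'.1 hr'.2)⟩
  have := Finset.card_le_card hsub
  rwa [Nat.card_Icc, Nat.add_sub_cancel] at this

omit hp in
lemma colLen_eq_sum (m c : ℕ) :
    colLen n p m c = ∑ r ∈ Finset.Icc 1 n, if c ≤ p m r then 1 else 0 := by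
  rw [colLen, Finset.card_filter]

omit hp in
lemma sum_colLen_le_comp (m c : ℕ) :
    (∑ c' ∈ Finset.Icc 1 c, colLen n p m c') ≤ compSize n p m := by
  rw [compSize]
  calc (∑ c' ∈ Finset.Icc 1 c, colLen n p m c')
      = ∑ c' ∈ Finset.Icc 1 c, ∑ r ∈ Finset.Icc 1 n,
          if c' ≤ p m r then 1 else 0 := by
        apply Finset.sum_congr rfl; intro c' _; exact colLen_eq_sum m c'
    _ = ∑ r ∈ Finset.Icc 1 n, ∑ c' ∈ Finset.Icc 1 c,
          if c' ≤ p m r then 1 else 0 := Finset.sum_comm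
    _ ≤ ∑ r ∈ Finset.Icc 1 n, p m r := by
        apply Finset.sum_le_sum
        intro r _
        rw [← Finset.card_filter, Icc_filter_le, Nat.card_Icc, Nat.add_sub_cancel]
        omega

lemma sum_colLen_node {r c m : ℕ} (hA : InDiag p (r, c, m)) :
    (∑ c' ∈ Finset.Icc 1 (c - 1), colLen n p m c') + r ≤
      ∑ c' ∈ Finset.Icc 1 c, colLen n p m c' := by
  obtain ⟨_, _, _, _, hc1, _⟩ := diag_bounds hp hA
  have hc : c - 1 + 1 = c := by omega
  have := Finset.sum_Icc_succ_top (a := 1) (b := c - 1) (by omega)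
    (f := fun c' => colLen n p m c')
  rw [hc] at this
  rw [this]
  have := colLen_ge hp hA
  omega

omit hp in
lemma Tsum_anti {m1 m2 : ℕ} (h : m1 ≤ m2) : Tsum l n p m2 ≤ Tsum l n p m1 := by
  apply Finset.sum_le_sum_of_subset
  apply Finset.Icc_subset_Icc_left
  omega

omit hp in
lemma Tsum_step {m : ℕ} (h1 : 1 ≤ m) (hl : m ≤ l) :
    Tsum l n p m + compSize n p m = Tsum l n p (m - 1) := by
  have hins : Finset.Icc m l = insert m (Finset.Icc (m + 1) l) := by
    ext x
    simp only [Finset.mem_Icc, Finset.mem_insert]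
    omega
  have hm1 : m - 1 + 1 = m := by omega
  rw [Tsum, Tsum, hm1, hins, Finset.sum_insert (by simp)]
  ring

lemma colTab_le_K_self {r c m : ℕ} (hA : InDiag p (r, c, m)) :
    colTab l n p (r, c, m) ≤ Kv l n p m c := by
  rw [colTab_eq, Kv]
  have := sum_colLen_node hp hA
  omega

lemma colTab_pos {r c m : ℕ} (hA : InDiag p (r, c, m)) :
    1 ≤ colTab l n p (r, c, m) := by
  obtain ⟨hr1, _, _, _, _, _⟩ := diag_bounds hp hA
  rw [colTab_eq]
  omega

lemma colTab_le_n {r c m : ℕ} (hA : InDiag p (r, c, m)) :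
    colTab l n p (r, c, m) ≤ n := by
  obtain ⟨_, _, hm1, hml, _, _⟩ := diag_bounds hp hA
  have h1 := colTab_le_K_self hp hA
  have h2 : Kv l n p m c ≤ Tsum l n p (m - 1) := by
    rw [Kv, ← Tsum_step (p := p) hm1 hml]
    have := sum_colLen_le_comp (p := p) (n := n) m c
    omega
  have h3 : Tsum l n p (m - 1) ≤ Tsum l n p 0 := Tsum_anti (by omega)
  have h4 : Tsum l n p 0 = n := by
    have he : Tsum l n p 0 = ∑ m' ∈ Finset.Icc 1 l, ∑ r' ∈ Finset.Icc 1 n, p m' r' := rfl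
    rw [he, hp.2.2]
  omega

lemma mem_left_iff {r c m mB cB : ℕ} (hA : InDiag p (r, c, m))
    (hmB1 : 1 ≤ mB) (hmBl : mB ≤ l) :
    colTab l n p (r, c, m) ≤ Kv l n p mB cB ↔ (mB < m ∨ (m = mB ∧ c ≤ cB)) := by
  obtain ⟨hr1, hrn, hm1, hml, hc1, hc⟩ := diag_bounds hp hA
  constructor
  · intro hle
    by_contra hcon
    push_neg at hcon
    rcases Nat.lt_trichotomy m mB with hlt | heq | hgt
    · -- m < mB : colTab > Kv
      have h1 : Kv l n p mB cB ≤ Tsum l n p (mB - 1) := by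
        rw [Kv, ← Tsum_step (p := p) hmB1 hmBl]
        have := sum_colLen_le_comp (p := p) (n := n) mB cB
        omega
      have h2 : Tsum l n p (mB - 1) ≤ Tsum l n p m := Tsum_anti (by omega)
      rw [colTab_eq] at hle
      omega
    · -- m = mB, c > cB
      have hccB : cB < c := by
        have := hcon.2 heq
        omega
      have hsub : (∑ c' ∈ Finset.Icc 1 cB, colLen n p m c') ≤
          ∑ c' ∈ Finset.Icc 1 (c - 1), colLen n p m c' := by
        apply Finset.sum_le_sum_of_subset
        apply Finset.Icc_subset_Icc_right
        omega
      rw [Kv, ← heq] at hle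
      rw [colTab_eq] at hle
      omega
    · omega
  · intro hor
    rcases hor with hlt | ⟨heq, hcle⟩
    · -- mB < m
      have h1 : colTab l n p (r, c, m) ≤ Tsum l n p (m - 1) := by
        have := colTab_le_K_self hp hA
        have h2 : Kv l n p m c ≤ Tsum l n p (m - 1) := by
          rw [Kv, ← Tsum_step (p := p) hm1 hml]
          have := sum_colLen_le_comp (p := p) (n := n) m c
          omega
        omega
      have h2 : Tsum l n p (m - 1) ≤ Tsum l n p mB := Tsum_anti (by omega)
      rw [Kv]
      omega
    · subst heq
      have h1 := colTab_le_K_self hp hA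
      have hsub : (∑ c' ∈ Finset.Icc 1 c, colLen n p m c') ≤
          ∑ c' ∈ Finset.Icc 1 cB, colLen n p m c' := by
        apply Finset.sum_le_sum_of_subset
        apply Finset.Icc_subset_Icc_right
        omega
      rw [Kv] at h1 ⊢
      omega

lemma colTab_injOn {A1 A2 : Node} (h1 : InDiag p A1) (h2 : InDiag p A2)
    (heq : colTab l n p A1 = colTab l n p A2) : A1 = A2 := by
  obtain ⟨r1, c1, m1⟩ := A1
  obtain ⟨r2, c2, m2⟩ := A2
  obtain ⟨_, _, hm21, hm2l, _, _⟩ := diag_bounds hp h2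
  obtain ⟨_, _, hm11, hm1l, _, _⟩ := diag_bounds hp h1
  have k2 := colTab_le_K_self hp h2
  have k1 := colTab_le_K_self hp h1
  have e1 : m2 < m1 ∨ (m1 = m2 ∧ c1 ≤ c2) :=
    (mem_left_iff hp h1 hm21 hm2l).mp (by omega)
  have e2 : m1 < m2 ∨ (m2 = m1 ∧ c2 ≤ c1) :=
    (mem_left_iff hp h2 hm11 hm1l).mp (by omega)
  have hm : m1 = m2 := by omega
  have hc : c1 = c2 := by omega
  subst hm; subst hc
  rw [colTab_eq, colTab_eq] at heq
  have : r1 = r2 := by omega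
  rw [this]

noncomputable def Dg (l n : ℕ) (p : ℕ → ℕ → ℕ) : Finset Node :=
  (Finset.Icc 1 n ×ˢ Finset.Icc 1 n ×ˢ Finset.Icc 1 l).filter fun A => InDiag p A

lemma mem_Dg {A : Node} (hA : InDiag p A) : A ∈ Dg l n p := by
  obtain ⟨r, c, m⟩ := A
  obtain ⟨hr1, hrn, hm1, hml, hc1, hc⟩ := diag_bounds hp hA
  have hcn : c ≤ n := le_trans hc (part_le_n hp hm1 hml hr1 hrn)
  rw [Dg, Finset.mem_filter]
  refine ⟨?_, hA⟩
  rw [Finset.mem_product, Finset.mem_product]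
  simp only [Finset.mem_Icc]
  exact ⟨⟨hr1, hrn⟩, ⟨hc1, hcn⟩, ⟨hm1, hml⟩⟩

lemma card_Dg : (Dg l n p).card = n := by
  rw [Dg, Finset.card_filter]
  rw [Finset.sum_product]
  have hstep : ∀ r ∈ Finset.Icc 1 n,
      (∑ x ∈ Finset.Icc 1 n ×ˢ Finset.Icc 1 l,
        if InDiag p (r, x) then 1 else 0) =
      ∑ m ∈ Finset.Icc 1 l, p m r := by
    intro r hr
    rw [Finset.mem_Icc] at hr
    rw [Finset.sum_product]
    rw [Finset.sum_comm]
    apply Finset.sum_congr rfl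
    intro m hm
    rw [Finset.mem_Icc] at hm
    have hple : p m r ≤ n := part_le_n hp hm.1 hm.2 hr.1 hr.2
    have : (∑ c ∈ Finset.Icc 1 n, if InDiag p (r, c, m) then 1 else 0)
        = ((Finset.Icc 1 n).filter fun c => InDiag p (r, c, m)).card := by
      rw [Finset.card_filter]
    rw [this]
    have hfe : ((Finset.Icc 1 n).filter fun c => InDiag p (r, c, m)) =
        Finset.Icc 1 (p m r) := by
      ext c
      rw [Finset.mem_filter]
      simp only [Finset.mem_filter, Finset.mem_Icc, InDiag]
      omega
    rw [hfe, Nat.card_Icc, Nat.add_sub_cancel]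
  rw [Finset.sum_congr rfl hstep, Finset.sum_comm]
  exact hp.2.2

lemma colTab_surj {i : ℕ} (hi1 : 1 ≤ i) (hin : i ≤ n) :
    ∃ A, InDiag p A ∧ colTab l n p A = i := by
  have hsub : (Dg l n p).image (colTab l n p) ⊆ Finset.Icc 1 n := by
    intro x hx
    rw [Finset.mem_image] at hx
    obtain ⟨A, hA, rfl⟩ := hx
    rw [Dg, Finset.mem_filter] at hA
    obtain ⟨r, c, m⟩ := A
    rw [Finset.mem_Icc]
    exact ⟨colTab_pos hp hA.2, colTab_le_n hp hA.2⟩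
  have hcard : (Finset.Icc 1 n).card ≤ ((Dg l n p).image (colTab l n p)).card := by
    rw [Finset.card_image_of_injOn, card_Dg hp, Nat.card_Icc, Nat.add_sub_cancel]
    intro A1 h1 A2 h2 heq
    simp only [Dg, Finset.coe_filter, Set.mem_setOf_eq] at h1 h2
    exact colTab_injOn hp h1.2 h2.2 heq
  have heq : (Dg l n p).image (colTab l n p) = Finset.Icc 1 n :=
    Finset.eq_of_subset_of_card_le hsub hcard
  have : i ∈ (Dg l n p).image (colTab l n p) := by
    rw [heq, Finset.mem_Icc]; exact ⟨hi1, hin⟩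
  rw [Finset.mem_image] at this
  obtain ⟨A, hA, hAi⟩ := this
  rw [Dg, Finset.mem_filter] at hA
  exact ⟨A, hA.2, hAi⟩

end MP

/-- If a standard `μ`-tableau `s` is `λ`-column-dominated on `1,…,j`
and `s ⊵ t` (i.e. `w_s ≥ w_t` in the Bruhat order), then `t` is `λ`-column-dominated
on `1,…,j`. -/
theorem colDom_of_bruhat_le (l n : ℕ) (hl : 1 ≤ l) (hn : 1 ≤ n)
    (lam mu : ℕ → ℕ → ℕ) (hlam : IsMP l n lam) (hmu : IsMP l n mu)
    (j : ℕ) (hj : j ≤ n)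
    (s t : Node → ℕ) (hs : IsTab n mu s) (ht : IsTab n mu t)
    (hsstd : IsStd mu s) (htstd : IsStd mu t)
    (ws wt : Equiv.Perm ℕ)
    (hws : IsPermOfTab n mu (colTab l n mu) s ws)
    (hwt : IsPermOfTab n mu (colTab l n mu) t wt)
    (hdom : ColDomOn l n lam mu s j)
    (hbru : BruhatLE n wt ws) :
    ColDomOn l n lam mu t j := by
  intro i A B hi1 hij hA htA hB hcB
  obtain ⟨rB, cB, mB⟩ := B
  obtain ⟨hrB1, hrBn, hmB1, hmBl, hcB1, hcBle⟩ := diag_bounds hlam hB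
  set K := Kv l n mu mB cB with hK
  -- Step 1: every i' ≤ i has its ws-position within [1, K]
  have hws_small : ∀ i', 1 ≤ i' → i' ≤ i → ∃ a, a ∈ Finset.Icc 1 K ∧ ws a = i' := by
    intro i' h1 h2
    obtain ⟨A', hA', hsA'⟩ := hs.2.2 i' h1 (by omega)
    obtain ⟨B', hB', hcB'⟩ := colTab_surj hlam h1 (by omega)
    have hwl : WeaklyLeft A' B' := hdom i' A' B' h1 (by omega) hA' hsA' hB' hcB'
    -- B' is weakly left of B
    obtain ⟨rB', cB', mB'⟩ := B'
    have hBle : colTab l n lam (rB', cB', mB') ≤ Kv l n lam mB cB := by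
      have hself := colTab_le_K_self hlam hB
      omega
    have hwl2 := (mem_left_iff hlam hB' hmB1 hmBl).mp hBle
    -- combine: A' weakly left of (·, cB, mB)
    obtain ⟨rA', cA', mA'⟩ := A'
    have hcomb : mB < mA' ∨ (mA' = mB ∧ cA' ≤ cB) := by
      have hwla : mB' < mA' ∨ (mA' = mB' ∧ cA' ≤ cB') := hwl
      have hwlb : mB < mB' ∨ (mB' = mB ∧ cB' ≤ cB) := hwl2
      omega
    have hpos := (mem_left_iff hmu hA' hmB1 hmBl).mpr hcomb
    refine ⟨colTab l n mu (rA', cA', mA'), ?_, ?_⟩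
    · rw [Finset.mem_Icc]
      exact ⟨colTab_pos hmu hA', hpos⟩
    · rw [hws.2 _ hA', hsA']
  -- Step 2: Dc ws K i ≥ i
  have hws0 : ws 0 = 0 := hws.1 0 (Or.inl rfl)
  have hwt0 : wt 0 = 0 := hwt.1 0 (Or.inl rfl)
  have hDws : i ≤ Dc ws K i := by
    have hsub : Finset.Icc 1 i ⊆
        ((Finset.Icc 1 K).filter fun a => ws a ≤ i).image ws := by
      intro i' hi'
      rw [Finset.mem_Icc] at hi'
      obtain ⟨a, ha, hwa⟩ := hws_small i' hi'.1 hi'.2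
      rw [Finset.mem_image]
      exact ⟨a, Finset.mem_filter.mpr ⟨ha, by omega⟩, hwa⟩
    have h1 := Finset.card_le_card hsub
    have h2 := Finset.card_image_le (s := (Finset.Icc 1 K).filter fun a => ws a ≤ i)
      (f := ws)
    rw [Nat.card_Icc, Nat.add_sub_cancel] at h1
    rw [Dc]
    omega
  -- Step 3: Bruhat comparison
  have hDwt : i ≤ Dc wt K i := le_trans hDws (Dc_le_of_bruhat hbru K i)
  -- Step 4: pigeonhole, find a ≤ K with wt a = i
  have hex : ∃ a, a ∈ Finset.Icc 1 K ∧ wt a = i := by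
    by_contra hcon
    push_neg at hcon
    have hsub : ((Finset.Icc 1 K).filter fun a => wt a ≤ i).image wt ⊆
        Finset.Icc 1 (i - 1) := by
      intro x hx
      rw [Finset.mem_image] at hx
      obtain ⟨a, ha, rfl⟩ := hx
      rw [Finset.mem_filter, Finset.mem_Icc] at ha
      have hne := hcon a (Finset.mem_Icc.mpr ⟨ha.1.1, ha.1.2⟩)
      have hpos : 1 ≤ wt a := by
        by_contra h
        have hz : wt a = 0 := by omega
        have : a = 0 := wt.injective (by rw [hz, hwt0])
        omega
      rw [Finset.mem_Icc]
      omega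
    have hinj : Set.InjOn wt ((Finset.Icc 1 K).filter fun a => wt a ≤ i) := by
      intro a _ b _ hab
      exact wt.injective hab
    have h1 := Finset.card_le_card hsub
    have h2 := Finset.card_image_of_injOn hinj
    rw [Nat.card_Icc] at h1
    rw [Dc] at hDwt
    omega
  obtain ⟨a, ha, hwa⟩ := hex
  -- a = colTab mu A
  have hwtA := hwt.2 A hA
  have haA : a = colTab l n mu A := by
    apply wt.injective
    rw [hwa, hwtA, htA]
  rw [Finset.mem_Icc] at ha
  obtain ⟨rA, cA, mA⟩ := A
  have hcolA : colTab l n mu (rA, cA, mA) ≤ Kv l n mu mB cB := by omega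
  have hfin := (mem_left_iff hmu hA hmB1 hmBl).mp hcolA
  exact (by omega : mB < mA ∨ (mA = mB ∧ cA ≤ cB))


end FS
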